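/- Let α ∈ (1,2) and let ρ, σ be density operators. Define the Quantum Chernoff Coefficient Q(ρ,σ) = inf_{0<s<1} Tr[ρ^s σ^(1-s)] and the pretty good fidelity F_pg(ρ,σ) = Tr[ρ^(1/2) σ^(1/2)]. For any two states ρ₀, ρ₁ on a finite-dimensional Hilbert space, define ρ̃₀ = (1/2)(ρ₀ ⊗ |0⟩⟨0| + ρ₁ ⊗ |1⟩⟨1|) and ρ̃₁ = (1/2)(ρ₁ ⊗ |0⟩⟨0| + ρ₀ ⊗ |1⟩⟨1|). Then Q(ρ̃₀, ρ̃₁) = F_pg(ρ₀, ρ₁). -/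

import Mathlib

open Matrix Kronecker
open scoped ComplexOrder

/-- Fractional power of a matrix via the continuous functional calculus. -/
noncomputable def mpow {m : Type*} [Fintype m] [DecidableEq m]
    (A : Matrix m m ℂ) (r : ℝ) : Matrix m m ℂ :=
  cfc (fun x : ℝ => x ^ r) A


variable {m : Type*} [Fintype m] [DecidableEq m]

open scoped MatrixOrder in
noncomputable def Matrix.PosSemidef.sqrt {A : Matrix m m ℂ} (_hA : A.PosSemidef) : Matrix m m ℂ :=
  CFC.sqrt A

open scoped MatrixOrder in
lemma Matrix.PosSemidef.posSemidef_sqrt {A : Matrix m m ℂ} (hA : A.PosSemidef) :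
    hA.sqrt.PosSemidef :=
  Matrix.nonneg_iff_posSemidef.mp (CFC.sqrt_nonneg A)

open scoped MatrixOrder in
lemma Matrix.PosSemidef.sqrt_mul_self {A : Matrix m m ℂ} (hA : A.PosSemidef) :
    hA.sqrt * hA.sqrt = A :=
  CFC.sqrt_mul_sqrt_self A hA.nonneg

open scoped MatrixOrder in
lemma Matrix.PosSemidef.eq_sqrt_of_sq_eq {B : Matrix m m ℂ} (hB : B.PosSemidef)
    {A : Matrix m m ℂ} (hA : A.PosSemidef) (h : B ^ 2 = A) : B = hA.sqrt :=
  ((CFC.sqrt_eq_iff A B hA.nonneg hB.nonneg).mpr (by rw [← sq]; exact h)).symm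

open scoped MatrixOrder in
lemma mpow_eq_sqrt {A : Matrix m m ℂ} (hA : A.PosSemidef) : mpow A (1/2) = hA.sqrt := by
  have h1 : mpow A (1/2) = cfc (fun x : ℝ => Real.sqrt x) A := by
    apply cfc_congr
    intro x hx
    simp only []
    rw [← Real.sqrt_eq_rpow]
  rw [h1, Matrix.PosSemidef.sqrt, CFC.sqrt_eq_cfc, cfc_nnreal_eq_real _ A hA.nonneg]
  exact cfc_congr fun x _ => by rw [Real.sqrt]

lemma posSemidef_kron {p : Type*} [Fintype p] [DecidableEq p]
    {A : Matrix m m ℂ} {B : Matrix p p ℂ} (hA : A.PosSemidef) (hB : B.PosSemidef) :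
    (A ⊗ₖ B).PosSemidef := by
  have h : A ⊗ₖ B = (hA.sqrt ⊗ₖ hB.sqrt)ᴴ * (hA.sqrt ⊗ₖ hB.sqrt) := by
    have hT : (hA.sqrt ⊗ₖ hB.sqrt)ᴴ = hA.sqrt ⊗ₖ hB.sqrt := by
      have hA' : hA.sqrtᴴ = hA.sqrt := hA.posSemidef_sqrt.1
      have hB' : hB.sqrtᴴ = hB.sqrt := hB.posSemidef_sqrt.1
      ext ⟨i,j⟩ ⟨k,l⟩
      simp only [conjTranspose_apply, kroneckerMap_apply, star_mul']
      rw [← conjTranspose_apply, ← conjTranspose_apply, hA', hB']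
    rw [hT, ← mul_kronecker_mul, hA.sqrt_mul_self, hB.sqrt_mul_self]
  rw [h]
  exact posSemidef_conjTranspose_mul_self _

lemma posSemidef_real_smul {A : Matrix m m ℂ} (hA : A.PosSemidef) {c : ℝ} (hc : 0 ≤ c) :
    ((c : ℂ) • A).PosSemidef := by
  have h : (c : ℂ) • A = ((Real.sqrt c : ℂ) • hA.sqrt)ᴴ * ((Real.sqrt c : ℂ) • hA.sqrt) := by
    rw [conjTranspose_smul, hA.posSemidef_sqrt.1, smul_mul_smul_comm, hA.sqrt_mul_self]
    congr 1
    rw [Complex.star_def, Complex.conj_ofReal, ← Complex.ofReal_mul, Real.mul_self_sqrt hc]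
  rw [h]; exact posSemidef_conjTranspose_mul_self _

lemma stdBasis_diag (k : Fin 2) :
    single k k (1:ℂ) = diagonal (fun j => if j = k then 1 else 0) := by
  ext i j
  fin_cases i <;> fin_cases j <;> fin_cases k <;> simp [single, diagonal]

lemma stdBasis_psd (k : Fin 2) : (single k k (1:ℂ)).PosSemidef := by
  rw [stdBasis_diag]
  refine PosSemidef.diagonal ?_
  intro i; dsimp; split <;> norm_num

lemma mpow_block {A B : Matrix m m ℂ} (hA : A.PosSemidef) (hB : B.PosSemidef) :
    mpow ((1/2 : ℂ) • (A ⊗ₖ single (0 : Fin 2) 0 (1:ℂ)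
        + B ⊗ₖ single (1 : Fin 2) 1 (1:ℂ))) (1/2)
      = (↑(Real.sqrt (1/2)) : ℂ) • (mpow A (1/2) ⊗ₖ single (0 : Fin 2) 0 (1:ℂ)
        + mpow B (1/2) ⊗ₖ single (1 : Fin 2) 1 (1:ℂ)) := by
  have hsum : Matrix.PosSemidef ((A ⊗ₖ (single (0 : Fin 2) 0 (1:ℂ)) + B ⊗ₖ (single (1 : Fin 2) 1 (1:ℂ))) : Matrix (m × Fin 2) (m × Fin 2) ℂ) :=
    (posSemidef_kron hA (stdBasis_psd 0)).add (posSemidef_kron hB (stdBasis_psd 1))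
  have hM : Matrix.PosSemidef ((1/2 : ℂ) • (A ⊗ₖ (single (0 : Fin 2) 0 (1:ℂ)) + B ⊗ₖ (single (1 : Fin 2) 1 (1:ℂ))) : Matrix (m × Fin 2) (m × Fin 2) ℂ) := by
    rw [show (1/2 : ℂ) = ((1/2 : ℝ) : ℂ) by norm_num]
    exact posSemidef_real_smul hsum (by norm_num)
  rw [mpow_eq_sqrt hM, mpow_eq_sqrt hA, mpow_eq_sqrt hB]
  have hTsum : Matrix.PosSemidef ((hA.sqrt ⊗ₖ (single (0 : Fin 2) 0 (1:ℂ)) + hB.sqrt ⊗ₖ (single (1 : Fin 2) 1 (1:ℂ))) : Matrix (m × Fin 2) (m × Fin 2) ℂ) :=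
    (posSemidef_kron hA.posSemidef_sqrt (stdBasis_psd 0)).add
      (posSemidef_kron hB.posSemidef_sqrt (stdBasis_psd 1))
  have hT : Matrix.PosSemidef (((Real.sqrt (1/2) : ℝ) : ℂ) • (hA.sqrt ⊗ₖ (single (0 : Fin 2) 0 (1:ℂ)) + hB.sqrt ⊗ₖ (single (1 : Fin 2) 1 (1:ℂ))) : Matrix (m × Fin 2) (m × Fin 2) ℂ) :=
    posSemidef_real_smul hTsum (Real.sqrt_nonneg _)
  refine (hT.eq_sqrt_of_sq_eq hM ?_).symm
  rw [pow_two, smul_mul_smul_comm, ← Complex.ofReal_mul, Real.mul_self_sqrt (by norm_num)]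
  congr 1
  · norm_num
  rw [add_mul, mul_add, mul_add, ← mul_kronecker_mul, ← mul_kronecker_mul,
    ← mul_kronecker_mul, ← mul_kronecker_mul, hA.sqrt_mul_self, hB.sqrt_mul_self]
  have h00 : single (0 : Fin 2) (0 : Fin 2) (1:ℂ) * single (0 : Fin 2) (0 : Fin 2) (1:ℂ) = single (0 : Fin 2) (0 : Fin 2) (1:ℂ) := by
    rw [Matrix.single_mul_single_same]; norm_num
  have h11 : single (1 : Fin 2) (1 : Fin 2) (1:ℂ) * single (1 : Fin 2) (1 : Fin 2) (1:ℂ) = single (1 : Fin 2) (1 : Fin 2) (1:ℂ) := by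
    rw [Matrix.single_mul_single_same]; norm_num
  have h01 : single (0 : Fin 2) (0 : Fin 2) (1:ℂ) * single (1 : Fin 2) (1 : Fin 2) (1:ℂ) = 0 := by
    rw [Matrix.single_mul_single_of_ne]; norm_num
  have h10 : single (1 : Fin 2) (1 : Fin 2) (1:ℂ) * single (0 : Fin 2) (0 : Fin 2) (1:ℂ) = 0 := by
    rw [Matrix.single_mul_single_of_ne]; norm_num
  rw [h00, h11, h01, h10]
  simp [kroneckerMap_zero_right]



-- AM-GM
lemma amgm {a b : ℝ} (ha : 0 ≤ a) (hb : 0 ≤ b) {s : ℝ} (hs0 : 0 < s) (hs1 : s < 1) :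
    2 * (a ^ (1/2 : ℝ) * b ^ (1/2 : ℝ)) ≤ a ^ s * b ^ (1 - s) + a ^ (1 - s) * b ^ s := by
  have h1s : 0 < 1 - s := by linarith
  rcases eq_or_lt_of_le ha with rfl | ha'
  · rw [Real.zero_rpow (by norm_num : (1/2:ℝ) ≠ 0), Real.zero_rpow hs0.ne',
      Real.zero_rpow h1s.ne']
    simp only [zero_mul, mul_zero]
    positivity
  rcases eq_or_lt_of_le hb with rfl | hb'
  · rw [Real.zero_rpow (by norm_num : (1/2:ℝ) ≠ 0), Real.zero_rpow hs0.ne',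
      Real.zero_rpow h1s.ne']
    simp only [zero_mul, mul_zero]
    positivity
  set x := a ^ s * b ^ (1 - s) with hx
  set y := a ^ (1 - s) * b ^ s with hy
  have hxnn : 0 ≤ x := by positivity
  have hynn : 0 ≤ y := by positivity
  have hxy : x * y = a * b := by
    rw [hx, hy]
    rw [show a ^ s * b ^ (1-s) * (a ^ (1-s) * b ^ s) = (a ^ s * a ^ (1-s)) * (b ^ (1-s) * b ^ s) by ring,
      ← Real.rpow_add ha', ← Real.rpow_add hb']
    norm_num
  have hsq : Real.sqrt x * Real.sqrt y = a ^ (1/2:ℝ) * b ^ (1/2:ℝ) := by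
    rw [← Real.sqrt_mul hxnn, hxy, Real.sqrt_mul ha, Real.sqrt_eq_rpow, Real.sqrt_eq_rpow]
  nlinarith [sq_nonneg (Real.sqrt x - Real.sqrt y), Real.sq_sqrt hxnn, Real.sq_sqrt hynn]

-- trace swap under involutive reindex
lemma trace_mul_reindex_swap {e : m ≃ m} (he : ∀ i, e (e i) = i) (A B : Matrix m m ℂ) :
    trace (A * Matrix.reindex e e B) = trace (B * Matrix.reindex e e A) := by
  have hsymm : ⇑e.symm = ⇑e := funext fun i => by
    rw [Equiv.symm_apply_eq, he]
  have expand : ∀ (X Y : Matrix m m ℂ),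
      trace (X * Matrix.reindex e e Y) = ∑ i, ∑ j, X i j * Y (e j) (e i) := by
    intro X Y
    simp only [Matrix.trace, diag_apply, mul_apply, reindex_apply, submatrix_apply, hsymm]
  rw [expand, expand, ← Fintype.sum_prod_type', ← Fintype.sum_prod_type']
  refine Fintype.sum_equiv ((Equiv.prodComm m m).trans (e.prodCongr e)) _ _ fun p => ?_
  obtain ⟨i, j⟩ := p
  simp only [Equiv.trans_apply, Equiv.prodComm_apply, Equiv.prodCongr_apply, Prod.swap_prod_mk,
    Prod.map_apply, he]
  ring


variable {p : Type*} [Fintype p] [DecidableEq p]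

noncomputable def reindexSAE (e : m ≃ p) : Matrix m m ℂ ≃⋆ₐ[ℂ] Matrix p p ℂ :=
  { Matrix.reindexAlgEquiv ℂ ℂ e with
    map_smul' := fun c A => by
      ext i j
      simp
    map_star' := fun A => by
      simp only [Matrix.reindexAlgEquiv_apply, star_eq_conjTranspose]
      ext i j
      simp [Matrix.conjTranspose_apply] }

lemma reindexSAE_apply (e : m ≃ p) (A : Matrix m m ℂ) :
    reindexSAE e A = Matrix.reindex e e A := rfl

lemma continuous_reindexSAE (e : m ≃ p) : Continuous (reindexSAE e) := by
  have : (reindexSAE e : Matrix m m ℂ → Matrix p p ℂ) = fun A => Matrix.reindex e e A := by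
    funext A; rfl
  rw [this]
  exact continuous_id.matrix_reindex e e

lemma map_cfc_reindex (e : m ≃ p) (A : Matrix m m ℂ) (hA : IsSelfAdjoint A) (f : ℝ → ℝ) :
    Matrix.reindex e e (cfc f A) = cfc f (Matrix.reindex e e A) := by
  have hA' : IsSelfAdjoint (reindexSAE e A) := hA.map (reindexSAE e)
  have := StarAlgHomClass.map_cfc (S := ℂ) (φ := reindexSAE e) f A
    (by rw [continuousOn_iff_continuous_restrict]; fun_prop) (continuous_reindexSAE e) hA hA'
  simpa [reindexSAE_apply] using this



lemma trace_triple (d e : m → ℂ) (U V : Matrix m m ℂ) :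
    trace ((U * diagonal d * star U) * (V * diagonal e * star V)) =
      ∑ i, ∑ j, d i * e j * ((star U * V) i j * star ((star U * V) i j)) := by
  have h0 : (U * diagonal d * star U) * (V * diagonal e * star V)
      = (U * diagonal d) * (star U * (V * diagonal e * star V)) := by
    simp only [mul_assoc]
  rw [h0, trace_mul_cycle, trace_mul_comm]
  have h2 : star U * (V * diagonal e * star V) * U
      = (star U * V) * diagonal e * ((star U * V)ᴴ) := by
    simp only [star_eq_conjTranspose, conjTranspose_mul, conjTranspose_conjTranspose, mul_assoc]
  rw [h2]
  set C := star U * V with hC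
  have h3 : ∀ M : Matrix m m ℂ, trace (diagonal d * M) = ∑ i, d i * M i i := by
    intro M
    simp [Matrix.trace, diag_apply, diagonal_mul]
  rw [h3]
  refine Finset.sum_congr rfl fun i _ => ?_
  have h4 : (C * diagonal e * Cᴴ) i i = ∑ j, C i j * e j * star (C i j) := by
    rw [mul_apply]
    refine Finset.sum_congr rfl fun j _ => ?_
    rw [mul_diagonal, conjTranspose_apply]
  rw [h4, Finset.mul_sum]
  refine Finset.sum_congr rfl fun j _ => ?_
  ring

lemma trace_cfc_cfc {A B : Matrix m m ℂ} (hA : A.IsHermitian) (hB : B.IsHermitian) (f g : ℝ → ℝ) :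
    (trace (cfc f A * cfc g B)).re =
      ∑ i, ∑ j, f (hA.eigenvalues i) * g (hB.eigenvalues j) *
        ‖(star (hA.eigenvectorUnitary : Matrix m m ℂ) * (hB.eigenvectorUnitary : Matrix m m ℂ)) i j‖^2 := by
  have : trace (cfc f A * cfc g B) =
      (↑(∑ i, ∑ j, f (hA.eigenvalues i) * g (hB.eigenvalues j) *
        ‖(star (hA.eigenvectorUnitary : Matrix m m ℂ) * (hB.eigenvectorUnitary : Matrix m m ℂ)) i j‖^2) : ℂ) := by
    rw [hA.cfc_eq, hB.cfc_eq]
    unfold Matrix.IsHermitian.cfc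
    rw [Unitary.conjStarAlgAut_apply, Unitary.conjStarAlgAut_apply,
      trace_triple]
    push_cast
    refine Finset.sum_congr rfl fun i _ => Finset.sum_congr rfl fun j _ => ?_
    simp only [Function.comp_apply]
    rw [Complex.star_def, Complex.mul_conj, Complex.normSq_eq_norm_sq]
    have hco : ∀ x : ℝ, (RCLike.ofReal x : ℂ) = Complex.ofReal x := fun x => rfl
    push_cast [hco]
    ring
  rw [this, Complex.ofReal_re]


lemma iInf_Ioo_eq (F : ℝ → ℝ) (h : ∀ s : ℝ, 0 < s → s < 1 → F (1/2) ≤ F s) :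
    (⨅ s : Set.Ioo (0:ℝ) 1, F ↑s) = F (1/2) := by
  haveI : Nonempty (Set.Ioo (0:ℝ) 1) := ⟨⟨1/2, by constructor <;> norm_num⟩⟩
  have hbdd : BddBelow (Set.range fun s : Set.Ioo (0:ℝ) 1 => F ↑s) := by
    refine ⟨F (1/2), ?_⟩
    rintro x ⟨s, rfl⟩
    exact h s.1 s.2.1 s.2.2
  apply le_antisymm
  · exact ciInf_le hbdd ⟨1/2, by constructor <;> norm_num⟩
  · exact le_ciInf fun s => h s.1 s.2.1 s.2.2

set_option maxHeartbeats 1000000 in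
/-- **Quantum Chernoff coefficient of the symmetrized states equals the pretty good
fidelity.**  For states `ρ₀, ρ₁` on a finite-dimensional Hilbert space, let
`ρ̃₀ = ½(ρ₀ ⊗ |0⟩⟨0| + ρ₁ ⊗ |1⟩⟨1|)` and `ρ̃₁ = ½(ρ₁ ⊗ |0⟩⟨0| + ρ₀ ⊗ |1⟩⟨1|)`.  Then
`Q(ρ̃₀, ρ̃₁) := inf_{0<s<1} Tr[ρ̃₀^s ρ̃₁^(1-s)] = Tr[ρ₀^(1/2) ρ₁^(1/2)] =: F_pg(ρ₀, ρ₁)`. -/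
theorem stmt11 {n : ℕ} (ρ₀ ρ₁ : Matrix (Fin n) (Fin n) ℂ)
    (h₀ : ρ₀.PosSemidef) (h₁ : ρ₁.PosSemidef)
    (h₀1 : trace ρ₀ = 1) (h₁1 : trace ρ₁ = 1) :
    (⨅ s : Set.Ioo (0:ℝ) 1,
      (trace (mpow ((1/2 : ℂ) • (ρ₀ ⊗ₖ single (0 : Fin 2) 0 (1:ℂ)
                      + ρ₁ ⊗ₖ single (1 : Fin 2) 1 (1:ℂ))) (s : ℝ) *
              mpow ((1/2 : ℂ) • (ρ₁ ⊗ₖ single (0 : Fin 2) 0 (1:ℂ)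
                      + ρ₀ ⊗ₖ single (1 : Fin 2) 1 (1:ℂ))) (1 - (s : ℝ)))).re) =
    (trace (mpow ρ₀ (1/2) * mpow ρ₁ (1/2))).re := by
  set M₀ : Matrix (Fin n × Fin 2) (Fin n × Fin 2) ℂ := (1/2 : ℂ) • (ρ₀ ⊗ₖ single (0 : Fin 2) 0 (1:ℂ)
      + ρ₁ ⊗ₖ single (1 : Fin 2) 1 (1:ℂ)) with hM₀def
  set M₁ : Matrix (Fin n × Fin 2) (Fin n × Fin 2) ℂ := (1/2 : ℂ) • (ρ₁ ⊗ₖ single (0 : Fin 2) 0 (1:ℂ)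
      + ρ₀ ⊗ₖ single (1 : Fin 2) 1 (1:ℂ)) with hM₁def
  have hPSD₀ : M₀.PosSemidef := by
    rw [hM₀def, show (1/2 : ℂ) = ((1/2 : ℝ) : ℂ) by norm_num]
    exact posSemidef_real_smul
      ((posSemidef_kron h₀ (stdBasis_psd 0)).add (posSemidef_kron h₁ (stdBasis_psd 1)))
      (by norm_num)
  have hPSD₁ : M₁.PosSemidef := by
    rw [hM₁def, show (1/2 : ℂ) = ((1/2 : ℝ) : ℂ) by norm_num]
    exact posSemidef_real_smul
      ((posSemidef_kron h₁ (stdBasis_psd 0)).add (posSemidef_kron h₀ (stdBasis_psd 1)))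
      (by norm_num)
  -- the trace formula
  have key : ∀ s t : ℝ, (trace (mpow M₀ s * mpow M₁ t)).re
      = ∑ i, ∑ j, (hPSD₀.1.eigenvalues i) ^ s * (hPSD₁.1.eigenvalues j) ^ t *
        ‖(star (hPSD₀.1.eigenvectorUnitary : Matrix (Fin n × Fin 2) (Fin n × Fin 2) ℂ) *
          (hPSD₁.1.eigenvectorUnitary : Matrix (Fin n × Fin 2) (Fin n × Fin 2) ℂ)) i j‖^2 :=
    fun s t => trace_cfc_cfc hPSD₀.1 hPSD₁.1 (fun x => x ^ s) (fun x => x ^ t)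
  -- symmetry
  set e : (Fin n × Fin 2) ≃ (Fin n × Fin 2) :=
    Equiv.prodCongr (Equiv.refl (Fin n)) (Equiv.swap 0 1) with hedef
  have he : ∀ p, e (e p) = p := by
    rintro ⟨i, k⟩
    simp [hedef, Equiv.swap_apply_self]
  have hswap : Matrix.reindex e e M₀ = M₁ := by
    have hsymm : ⇑e.symm = ⇑e := funext fun i => by rw [Equiv.symm_apply_eq, he]
    rw [hM₀def, hM₁def]
    ext ⟨i, k⟩ ⟨j, l⟩
    simp only [reindex_apply, submatrix_apply, hsymm, hedef, Equiv.prodCongr_apply,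
      Prod.map_apply, Equiv.refl_apply, Matrix.smul_apply, Matrix.add_apply, kroneckerMap_apply,
      smul_eq_mul]
    fin_cases k <;> fin_cases l <;>
      simp [Matrix.single, Equiv.swap_apply_left, Equiv.swap_apply_right] <;> ring
  have hsa₀ : IsSelfAdjoint M₀ := hPSD₀.1
  have hpow_swap : ∀ r : ℝ, mpow M₁ r = Matrix.reindex e e (mpow M₀ r) := by
    intro r
    have h1 : mpow M₁ r = cfc (fun x : ℝ => x ^ r) (Matrix.reindex e e M₀) := by
      rw [hswap]; rfl
    rw [h1, ← map_cfc_reindex e M₀ hsa₀]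
    rfl
  have hGsym : ∀ s : ℝ, (trace (mpow M₀ s * mpow M₁ (1 - s))).re
      = (trace (mpow M₀ (1 - s) * mpow M₁ s)).re := by
    intro s
    rw [hpow_swap (1 - s), hpow_swap s, trace_mul_reindex_swap he]
  -- nonnegativity of eigenvalues
  have ha : ∀ i, 0 ≤ hPSD₀.1.eigenvalues i := hPSD₀.eigenvalues_nonneg
  have hb : ∀ j, 0 ≤ hPSD₁.1.eigenvalues j := hPSD₁.eigenvalues_nonneg
  -- key inequality
  have hineq : ∀ s : ℝ, 0 < s → s < 1 →
      (trace (mpow M₀ (1/2 : ℝ) * mpow M₁ (1/2 : ℝ))).re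
        ≤ (trace (mpow M₀ s * mpow M₁ (1 - s))).re := by
    intro s hs0 hs1
    have h2 : 2 * (trace (mpow M₀ (1/2 : ℝ) * mpow M₁ (1/2 : ℝ))).re
        ≤ 2 * (trace (mpow M₀ s * mpow M₁ (1 - s))).re := by
      have hsum : (trace (mpow M₀ s * mpow M₁ (1 - s))).re
          + (trace (mpow M₀ (1 - s) * mpow M₁ s)).re
          = 2 * (trace (mpow M₀ s * mpow M₁ (1 - s))).re := by
        rw [← hGsym s]; ring
      rw [← hsum, key s (1 - s), key (1 - s) s, key (1/2 : ℝ) (1/2 : ℝ),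
        ← Finset.sum_add_distrib, Finset.mul_sum]
      refine Finset.sum_le_sum fun i _ => ?_
      rw [← Finset.sum_add_distrib, Finset.mul_sum]
      refine Finset.sum_le_sum fun j _ => ?_
      have hc : (0:ℝ) ≤ ‖(star (hPSD₀.1.eigenvectorUnitary : Matrix (Fin n × Fin 2) (Fin n × Fin 2) ℂ) *
          (hPSD₁.1.eigenvectorUnitary : Matrix (Fin n × Fin 2) (Fin n × Fin 2) ℂ)) i j‖^2 := by
        positivity
      have := mul_le_mul_of_nonneg_right (amgm (ha i) (hb j) hs0 hs1) hc
      nlinarith [this]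
    linarith
  -- value at 1/2
  have hval : (trace (mpow M₀ (1/2 : ℝ) * mpow M₁ (1/2 : ℝ))).re
      = (trace (mpow ρ₀ (1/2) * mpow ρ₁ (1/2))).re := by
    rw [hM₀def, hM₁def, mpow_block h₀ h₁, mpow_block h₁ h₀, smul_mul_smul_comm,
      ← Complex.ofReal_mul, Real.mul_self_sqrt (by norm_num)]
    rw [add_mul, mul_add, mul_add, ← mul_kronecker_mul, ← mul_kronecker_mul,
      ← mul_kronecker_mul, ← mul_kronecker_mul]
    have h00 : single (0 : Fin 2) (0 : Fin 2) (1:ℂ) * single (0 : Fin 2) (0 : Fin 2) (1:ℂ) = single (0 : Fin 2) (0 : Fin 2) (1:ℂ) := by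
      rw [Matrix.single_mul_single_same]; norm_num
    have h11 : single (1 : Fin 2) (1 : Fin 2) (1:ℂ) * single (1 : Fin 2) (1 : Fin 2) (1:ℂ) = single (1 : Fin 2) (1 : Fin 2) (1:ℂ) := by
      rw [Matrix.single_mul_single_same]; norm_num
    have h01 : single (0 : Fin 2) (0 : Fin 2) (1:ℂ) * single (1 : Fin 2) (1 : Fin 2) (1:ℂ) = 0 := by
      rw [Matrix.single_mul_single_of_ne]; norm_num
    have h10 : single (1 : Fin 2) (1 : Fin 2) (1:ℂ) * single (0 : Fin 2) (0 : Fin 2) (1:ℂ) = 0 := by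
      rw [Matrix.single_mul_single_of_ne]; norm_num
    rw [h00, h11, h01, h10]
    simp only [kroneckerMap_zero_right, add_zero, zero_add, trace_smul, trace_add,
      trace_kronecker, trace_zero, mul_zero, zero_mul]
    have htr0 : trace (single (0 : Fin 2) (0 : Fin 2) (1:ℂ)) = 1 := by
      simp [Matrix.trace, Fin.sum_univ_two, Matrix.single]
    have htr1 : trace (single (1 : Fin 2) (1 : Fin 2) (1:ℂ)) = 1 := by
      simp [Matrix.trace, Fin.sum_univ_two, Matrix.single]
    rw [htr0, htr1, mul_one, mul_one, trace_mul_comm (mpow ρ₁ (1/2)) (mpow ρ₀ (1/2))]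
    rw [smul_eq_mul]
    simp only [Complex.mul_re, Complex.ofReal_re, Complex.ofReal_im, Complex.add_re,
      Complex.add_im, zero_mul, sub_zero]
    ring
  -- evaluate the infimum
  have hineq' : ∀ s : ℝ, 0 < s → s < 1 →
      (fun s : ℝ => (trace (mpow M₀ s * mpow M₁ (1 - s))).re) (1/2)
        ≤ (fun s : ℝ => (trace (mpow M₀ s * mpow M₁ (1 - s))).re) s := by
    intro s hs1 hs2
    simp only []
    rw [show (1 : ℝ) - 1/2 = 1/2 by norm_num]
    exact hineq s hs1 hs2
  have hfin := iInf_Ioo_eq (fun s : ℝ => (trace (mpow M₀ s * mpow M₁ (1 - s))).re) hineq'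
  rw [show (1 : ℝ) - 1/2 = 1/2 by norm_num] at hfin
  exact hfin.trans hval
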